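/- In the contact-functional setting, the functional J(w,v) = ∫_{Γ_C} j(x, w(x), v(x)) dμ is well defined and real-valued on X × X with X = L²(μ; ℝ^d), J(w,·) is locally Lipschitz for every w ∈ X, and every ζ ∈ ∂₂J(w,v) satisfies ‖ζ‖_{X*} ≤ √(μ(Γ_C)) (ḡ_ν + ḡ_τ c_τ) for all w, v ∈ X; in particular J satisfies the growth condition H(J)(b) with c₂ = 0. -/

import Mathlib

open Filter MeasureTheory

/-- Clarke generalized directional derivative. -/
noncomputable def clarkeDeriv {Y : Type*} [NormedAddCommGroup Y] [NormedSpace ℝ Y]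
    (φ : Y → ℝ) (y z : Y) : ℝ :=
  Filter.limsup (fun p : Y × ℝ => (φ (p.1 + p.2 • z) - φ p.1) / p.2)
    ((nhds y) ×ˢ (nhdsWithin 0 (Set.Ioi 0)))

/-- Clarke subdifferential. -/
def clarkeSubdiff {Y : Type*} [NormedAddCommGroup Y] [NormedSpace ℝ Y]
    (φ : Y → ℝ) (y : Y) : Set (Y →L[ℝ] ℝ) :=
  {ξ | ∀ z, ξ z ≤ clarkeDeriv φ y z}

open scoped ENNReal

set_option maxHeartbeats 2000000

section Helpers

variable {Ω : Type*} [MeasurableSpace Ω] {μ : Measure Ω}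

/-- Carathéodory-type composition: sections measurable, continuous in the parameter. -/
lemma aux_aemeasurable_comp_section {E : Type*} [MeasurableSpace E] [TopologicalSpace E]
    [TopologicalSpace.MetrizableSpace E] [SecondCountableTopology E] [OpensMeasurableSpace E]
    (g : Ω → E → ℝ) (hg : ∀ r : E, Measurable fun x => g x r)
    (hcont : ∀ x, Continuous (g x)) {f : Ω → E} (hf : AEMeasurable f μ) :
    AEMeasurable (fun x => g x (f x)) μ := by
  have hu : Measurable (Function.uncurry fun (r : E) (x : Ω) => g x r) :=
    measurable_uncurry_of_continuous_of_measurable (fun x => hcont x) fun r => hg r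
  exact hu.comp_aemeasurable (hf.prodMk aemeasurable_id)

/-- norm of tangential part is at most the norm when ν is a unit vector. -/
lemma aux_norm_proj_le {F : Type*} [NormedAddCommGroup F] [InnerProductSpace ℝ F]
    (ν ξ : F) (hν : ‖ν‖ = 1) :
    ‖ξ - (inner ℝ ξ ν : ℝ) • ν‖ ≤ ‖ξ‖ := by
  have hsq : ‖ξ - (inner ℝ ξ ν : ℝ) • ν‖ ^ 2 ≤ ‖ξ‖ ^ 2 := by
    rw [norm_sub_sq_real, real_inner_smul_right, norm_smul, hν]
    simp only [mul_one, Real.norm_eq_abs]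
    nlinarith [sq_nonneg (inner ℝ ξ ν : ℝ), sq_abs (inner ℝ ξ ν : ℝ)]
  calc ‖ξ - (inner ℝ ξ ν : ℝ) • ν‖ = Real.sqrt (‖ξ - (inner ℝ ξ ν : ℝ) • ν‖ ^ 2) := by
        rw [Real.sqrt_sq (norm_nonneg _)]
    _ ≤ Real.sqrt (‖ξ‖ ^ 2) := Real.sqrt_le_sqrt hsq
    _ = ‖ξ‖ := Real.sqrt_sq (norm_nonneg _)

/-- Cauchy–Schwarz: `∫ ‖u x‖ ≤ √(μ univ) * ‖u‖` for `u ∈ L²`. -/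
lemma aux_integral_norm_le {E : Type*} [NormedAddCommGroup E] (u : Lp E 2 μ)
    [IsFiniteMeasure μ] :
    ∫ x, ‖u x‖ ∂μ ≤ Real.sqrt (μ Set.univ).toReal * ‖u‖ := by
  rcases eq_or_ne μ 0 with h | h
  · subst h
    simp [integral_zero_measure]
  · have hmem : MemLp (fun x => ‖u x‖) 2 μ := (Lp.memLp u).norm
    have hone : MemLp (fun _ : Ω => (1 : ℝ)) 2 μ := memLp_const 1
    set F : Lp ℝ 2 μ := hmem.toLp _ with hF
    set G : Lp ℝ 2 μ := hone.toLp _ with hG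
    have hFG : (inner ℝ F G : ℝ) = ∫ x, ‖u x‖ ∂μ := by
      rw [L2.inner_def]
      refine integral_congr_ae ?_
      filter_upwards [MemLp.coeFn_toLp hmem, MemLp.coeFn_toLp hone] with x h1 h2
      rw [h1, h2]
      simp [RCLike.inner_apply]
    have hFn : ‖F‖ = ‖u‖ := by
      rw [hF, Lp.norm_toLp, eLpNorm_norm, Lp.norm_def]
    have hGn : ‖G‖ = Real.sqrt (μ Set.univ).toReal := by
      rw [hG, Lp.norm_toLp, eLpNorm_const (1 : ℝ) two_ne_zero h]
      have h2 : (2 : ℝ≥0∞).toReal = 2 := by simp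
      rw [h2]
      simp only [nnnorm_one, enorm_one, ENNReal.coe_one, one_mul]
      rw [← ENNReal.toReal_rpow, Real.sqrt_eq_rpow]
    calc ∫ x, ‖u x‖ ∂μ = (inner ℝ F G : ℝ) := hFG.symm
      _ ≤ ‖F‖ * ‖G‖ := real_inner_le_norm F G
      _ = Real.sqrt (μ Set.univ).toReal * ‖u‖ := by rw [hFn, hGn]; ring

end Helpers

lemma aux_clarke_bound {Y : Type*} [NormedAddCommGroup Y] [NormedSpace ℝ Y]
    {φ : Y → ℝ} {K : ℝ} (hK : 0 ≤ K)
    (hφ : ∀ a b : Y, |φ a - φ b| ≤ K * ‖a - b‖) (y : Y)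
    {ζ : Y →L[ℝ] ℝ} (hζ : ζ ∈ clarkeSubdiff φ y) : ‖ζ‖ ≤ K := by
  have key : ∀ z : Y, clarkeDeriv φ y z ≤ K * ‖z‖ := by
    intro z
    have hev : ∀ᶠ p : Y × ℝ in (nhds y) ×ˢ (nhdsWithin 0 (Set.Ioi 0)),
        (φ (p.1 + p.2 • z) - φ p.1) / p.2 ≤ K * ‖z‖ ∧
        -(K * ‖z‖) ≤ (φ (p.1 + p.2 • z) - φ p.1) / p.2 := by
      have h2 : ∀ᶠ p : Y × ℝ in (nhds y) ×ˢ (nhdsWithin 0 (Set.Ioi 0)),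
          p.2 ∈ Set.Ioi (0 : ℝ) :=
        (eventually_mem_nhdsWithin (a := (0:ℝ)) (s := Set.Ioi 0)).prod_inr (nhds y)
      filter_upwards [h2] with p hp
      have hp0 : (0 : ℝ) < p.2 := hp
      have habs : |φ (p.1 + p.2 • z) - φ p.1| ≤ K * (p.2 * ‖z‖) := by
        have h := hφ (p.1 + p.2 • z) p.1
        have hn : ‖p.1 + p.2 • z - p.1‖ = p.2 * ‖z‖ := by
          rw [add_sub_cancel_left, norm_smul, Real.norm_eq_abs, abs_of_pos hp0]
        rw [hn] at h
        exact h
      obtain ⟨hl, hr⟩ := abs_le.1 habs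
      constructor
      · rw [div_le_iff₀ hp0]; nlinarith
      · rw [le_div_iff₀ hp0]; nlinarith
    refine limsup_le_of_le ?_ (hev.mono fun p h => h.1)
    exact isCoboundedUnder_le_of_eventually_le _ (hev.mono fun p h => h.2)
  refine ζ.opNorm_le_bound hK fun z => ?_
  rw [Real.norm_eq_abs, abs_le]
  constructor
  · have h := (hζ (-z)).trans (key (-z))
    rw [map_neg, norm_neg] at h
    linarith
  · exact (hζ z).trans (key z)

/-- The contact integrand `j(x, η, ξ) = g_ν(x, η_ν) ξ_ν + g_τ(x, η_ν) j_τ(x, ξ_τ)`,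
where `η_ν = η·ν(x)` and `η_τ = η − η_ν ν(x)`. -/
noncomputable def jfun {Ω : Type*} {d : ℕ}
    (ν : Ω → EuclideanSpace ℝ (Fin d)) (gν gτ : Ω → ℝ → ℝ)
    (jτ : Ω → EuclideanSpace ℝ (Fin d) → ℝ)
    (x : Ω) (η ξ : EuclideanSpace ℝ (Fin d)) : ℝ :=
  gν x (inner ℝ η (ν x)) * (inner ℝ ξ (ν x) : ℝ) +
    gτ x (inner ℝ η (ν x)) * jτ x (ξ - (inner ℝ ξ (ν x) : ℝ) • ν x)

/-- The contact functional `J(w, v) = ∫_{Γ_C} j(x, w(x), v(x)) dμ` on `X = L²(μ; ℝ^d)`. -/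
noncomputable def Jfun {Ω : Type*} [MeasurableSpace Ω] {d : ℕ} (μ : Measure Ω)
    (ν : Ω → EuclideanSpace ℝ (Fin d)) (gν gτ : Ω → ℝ → ℝ)
    (jτ : Ω → EuclideanSpace ℝ (Fin d) → ℝ)
    (w v : Lp (EuclideanSpace ℝ (Fin d)) 2 μ) : ℝ :=
  ∫ x, jfun ν gν gτ jτ x (w x) (v x) ∂μ

/-- The contact functional `J` is well defined on `X × X`, `J(w,·)` is locally
Lipschitz for each `w`, and every `ζ ∈ ∂₂J(w,v)` satisfies
`‖ζ‖ ≤ √(μ(Γ_C)) (ḡ_ν + ḡ_τ c_τ)`; in particular H(J)(b) holds with `c₂ = 0`. -/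
theorem Jfun_wellDefined_locallyLipschitz_subdiff_bound
    {Ω : Type*} [MeasurableSpace Ω] (μ : MeasureTheory.Measure Ω)
    [MeasureTheory.IsFiniteMeasure μ]
    {d : ℕ} (hd : 1 ≤ d)
    (ν : Ω → EuclideanSpace ℝ (Fin d)) (hνmeas : Measurable ν)
    (hνunit : ∀ᵐ x ∂μ, ‖ν x‖ = 1)
    (gν gτ : Ω → ℝ → ℝ)
    (hgνmeas : ∀ r : ℝ, Measurable fun x => gν x r)
    (hgτmeas : ∀ r : ℝ, Measurable fun x => gτ x r)
    (gbarν gbarτ : ℝ) (hgbarν : 0 < gbarν) (hgbarτ : 0 < gbarτ)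
    (hgνbd : ∀ᵐ x ∂μ, ∀ r : ℝ, 0 ≤ gν x r ∧ gν x r ≤ gbarν)
    (hgτbd : ∀ᵐ x ∂μ, ∀ r : ℝ, 0 ≤ gτ x r ∧ gτ x r ≤ gbarτ)
    (Lgν Lgτ : ℝ) (hLgν : 0 < Lgν) (hLgτ : 0 < Lgτ)
    (hgνlip : ∀ᵐ x ∂μ, ∀ r₁ r₂ : ℝ, |gν x r₁ - gν x r₂| ≤ Lgν * |r₁ - r₂|)
    (hgτlip : ∀ᵐ x ∂μ, ∀ r₁ r₂ : ℝ, |gτ x r₁ - gτ x r₂| ≤ Lgτ * |r₁ - r₂|)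
    (jτ : Ω → EuclideanSpace ℝ (Fin d) → ℝ)
    (hjτmeas : ∀ ξ : EuclideanSpace ℝ (Fin d), Measurable fun x => jτ x ξ)
    (cτ : ℝ) (hcτ : 0 < cτ)
    (hjτlip : ∀ᵐ x ∂μ, ∀ ξ₁ ξ₂ : EuclideanSpace ℝ (Fin d),
      |jτ x ξ₁ - jτ x ξ₂| ≤ cτ * ‖ξ₁ - ξ₂‖)
    (e : Ω → EuclideanSpace ℝ (Fin d)) (he : MeasureTheory.MemLp e 2 μ)
    (hjτe : MeasureTheory.Integrable (fun x => jτ x (e x)) μ)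
    :
    (∀ w v : Lp (EuclideanSpace ℝ (Fin d)) 2 μ,
      MeasureTheory.Integrable (fun x => jfun ν gν gτ jτ x (w x) (v x)) μ) ∧
    (∀ w : Lp (EuclideanSpace ℝ (Fin d)) 2 μ, LocallyLipschitz (Jfun μ ν gν gτ jτ w)) ∧
    (∀ w v : Lp (EuclideanSpace ℝ (Fin d)) 2 μ,
      ∀ ζ ∈ clarkeSubdiff (Jfun μ ν gν gτ jτ w) v,
        ‖ζ‖ ≤ Real.sqrt (μ Set.univ).toReal * (gbarν + gbarτ * cτ)) := by
  classical
  -- the full a.e. hypothesis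
  have hP : ∀ᵐ x ∂μ, ‖ν x‖ = 1 ∧ (∀ r : ℝ, 0 ≤ gν x r ∧ gν x r ≤ gbarν) ∧
      (∀ r : ℝ, 0 ≤ gτ x r ∧ gτ x r ≤ gbarτ) ∧
      (∀ r₁ r₂ : ℝ, |gν x r₁ - gν x r₂| ≤ Lgν * |r₁ - r₂|) ∧
      (∀ r₁ r₂ : ℝ, |gτ x r₁ - gτ x r₂| ≤ Lgτ * |r₁ - r₂|) ∧
      (∀ ξ₁ ξ₂ : (EuclideanSpace ℝ (Fin d)), |jτ x ξ₁ - jτ x ξ₂| ≤ cτ * ‖ξ₁ - ξ₂‖) :=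
    hνunit.and (hgνbd.and (hgτbd.and (hgνlip.and (hgτlip.and hjτlip))))
  obtain ⟨N, hNsub, hNmeas, hNnull⟩ := exists_measurable_superset_of_null (ae_iff.mp hP)
  have hNP : ∀ x, x ∉ N → (‖ν x‖ = 1 ∧ (∀ r : ℝ, 0 ≤ gν x r ∧ gν x r ≤ gbarν) ∧
      (∀ r : ℝ, 0 ≤ gτ x r ∧ gτ x r ≤ gbarτ) ∧
      (∀ r₁ r₂ : ℝ, |gν x r₁ - gν x r₂| ≤ Lgν * |r₁ - r₂|) ∧
      (∀ r₁ r₂ : ℝ, |gτ x r₁ - gτ x r₂| ≤ Lgτ * |r₁ - r₂|) ∧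
      (∀ ξ₁ ξ₂ : (EuclideanSpace ℝ (Fin d)), |jτ x ξ₁ - jτ x ξ₂| ≤ cτ * ‖ξ₁ - ξ₂‖)) := by
    intro x hx
    by_contra h
    exact hx (hNsub h)
  have hgood : ∀ᵐ x ∂μ, x ∉ N := measure_eq_zero_iff_ae_notMem.mp hNnull
  -- modified versions, Lipschitz everywhere
  set gν' : Ω → ℝ → ℝ := fun x r => if x ∈ N then 0 else gν x r with hgν'
  set gτ' : Ω → ℝ → ℝ := fun x r => if x ∈ N then 0 else gτ x r with hgτ'
  set jτ' : Ω → (EuclideanSpace ℝ (Fin d)) → ℝ := fun x ξ => if x ∈ N then 0 else jτ x ξ with hjτ'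
  have hgν'meas : ∀ r : ℝ, Measurable fun x => gν' x r :=
    fun r => Measurable.ite hNmeas measurable_const (hgνmeas r)
  have hgτ'meas : ∀ r : ℝ, Measurable fun x => gτ' x r :=
    fun r => Measurable.ite hNmeas measurable_const (hgτmeas r)
  have hjτ'meas : ∀ ξ : (EuclideanSpace ℝ (Fin d)), Measurable fun x => jτ' x ξ :=
    fun ξ => Measurable.ite hNmeas measurable_const (hjτmeas ξ)
  have hgν'cont : ∀ x, Continuous (gν' x) := by
    intro x
    by_cases hx : x ∈ N
    · simp only [hgν', if_pos hx]; exact continuous_const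
    · simp only [hgν', if_neg hx]
      have hl := (hNP x hx).2.2.2.1
      refine (LipschitzWith.of_dist_le_mul (K := Lgν.toNNReal) fun a b => ?_).continuous
      rw [Real.dist_eq, Real.dist_eq, Real.coe_toNNReal _ hLgν.le]
      exact hl a b
  have hgτ'cont : ∀ x, Continuous (gτ' x) := by
    intro x
    by_cases hx : x ∈ N
    · simp only [hgτ', if_pos hx]; exact continuous_const
    · simp only [hgτ', if_neg hx]
      have hl := (hNP x hx).2.2.2.2.1
      refine (LipschitzWith.of_dist_le_mul (K := Lgτ.toNNReal) fun a b => ?_).continuous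
      rw [Real.dist_eq, Real.dist_eq, Real.coe_toNNReal _ hLgτ.le]
      exact hl a b
  have hjτ'cont : ∀ x, Continuous (jτ' x) := by
    intro x
    by_cases hx : x ∈ N
    · simp only [hjτ', if_pos hx]; exact continuous_const
    · simp only [hjτ', if_neg hx]
      have hl := (hNP x hx).2.2.2.2.2
      refine (LipschitzWith.of_dist_le_mul (K := cτ.toNNReal) fun a b => ?_).continuous
      rw [Real.dist_eq, dist_eq_norm, Real.coe_toNNReal _ hcτ.le]
      exact hl a b
  -- a.e. measurability building blocks
  have hWm : ∀ u : Lp (EuclideanSpace ℝ (Fin d)) 2 μ, AEMeasurable (fun x => (inner ℝ (u x) (ν x) : ℝ)) μ := by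
    intro u
    have hu : AEMeasurable (fun x => ((u x : (EuclideanSpace ℝ (Fin d))), ν x)) μ :=
      ((Lp.aestronglyMeasurable u).aemeasurable).prodMk hνmeas.aemeasurable
    exact (continuous_inner (𝕜 := ℝ) (E := EuclideanSpace ℝ (Fin d))).measurable.comp_aemeasurable hu
  have hVτm : ∀ u : Lp (EuclideanSpace ℝ (Fin d)) 2 μ,
      AEMeasurable (fun x => (u x : (EuclideanSpace ℝ (Fin d))) - (inner ℝ (u x) (ν x) : ℝ) • ν x) μ := by
    intro u
    have hu : AEMeasurable (fun x => ((u x : (EuclideanSpace ℝ (Fin d))), ((inner ℝ (u x) (ν x) : ℝ), ν x))) μ :=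
      ((Lp.aestronglyMeasurable u).aemeasurable).prodMk
        ((hWm u).prodMk hνmeas.aemeasurable)
    have hcont : Continuous (fun q : (EuclideanSpace ℝ (Fin d)) × ℝ × (EuclideanSpace ℝ (Fin d)) => q.1 - q.2.1 • q.2.2) :=
      continuous_fst.sub ((continuous_fst.comp continuous_snd).smul
        (continuous_snd.comp continuous_snd))
    exact hcont.measurable.comp_aemeasurable hu
  have hAm : ∀ u : Lp (EuclideanSpace ℝ (Fin d)) 2 μ, AEMeasurable (fun x => gν x (inner ℝ (u x) (ν x))) μ := by
    intro u
    have h1 : AEMeasurable (fun x => gν' x (inner ℝ (u x) (ν x))) μ :=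
      aux_aemeasurable_comp_section gν' hgν'meas hgν'cont (hWm u)
    refine h1.congr (hgood.mono fun x hx => ?_)
    simp only [hgν', if_neg hx]
  have hBm : ∀ u : Lp (EuclideanSpace ℝ (Fin d)) 2 μ, AEMeasurable (fun x => gτ x (inner ℝ (u x) (ν x))) μ := by
    intro u
    have h1 : AEMeasurable (fun x => gτ' x (inner ℝ (u x) (ν x))) μ :=
      aux_aemeasurable_comp_section gτ' hgτ'meas hgτ'cont (hWm u)
    refine h1.congr (hgood.mono fun x hx => ?_)
    simp only [hgτ', if_neg hx]
  have hCm : ∀ u : Lp (EuclideanSpace ℝ (Fin d)) 2 μ,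
      AEMeasurable (fun x => jτ x ((u x : (EuclideanSpace ℝ (Fin d))) - (inner ℝ (u x) (ν x) : ℝ) • ν x)) μ := by
    intro u
    have h1 : AEMeasurable (fun x => jτ' x ((u x : (EuclideanSpace ℝ (Fin d))) - (inner ℝ (u x) (ν x) : ℝ) • ν x)) μ :=
      aux_aemeasurable_comp_section jτ' hjτ'meas hjτ'cont (hVτm u)
    refine h1.congr (hgood.mono fun x hx => ?_)
    simp only [hjτ', if_neg hx]
  have hmeas : ∀ w v : Lp (EuclideanSpace ℝ (Fin d)) 2 μ,
      AEStronglyMeasurable (fun x => jfun ν gν gτ jτ x (w x) (v x)) μ := by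
    intro w v
    have : AEMeasurable (fun x => jfun ν gν gτ jτ x (w x) (v x)) μ := by
      simp only [jfun]
      exact ((hAm w).mul (hWm v)).add ((hBm w).mul (hCm v))
    exact this.aestronglyMeasurable
  -- Part 1 : integrability
  have hInt : ∀ w v : Lp (EuclideanSpace ℝ (Fin d)) 2 μ,
      Integrable (fun x => jfun ν gν gτ jτ x (w x) (v x)) μ := by
    intro w v
    have hv1 : Integrable (fun x => ‖(v x : (EuclideanSpace ℝ (Fin d)))‖) μ := ((Lp.memLp v).integrable one_le_two).norm
    have he1 : Integrable (fun x => ‖e x‖) μ := (he.integrable one_le_two).norm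
    have hbound : Integrable
        (fun x => gbarν * ‖(v x : (EuclideanSpace ℝ (Fin d)))‖ + gbarτ * (|jτ x (e x)| + cτ * (‖(v x : (EuclideanSpace ℝ (Fin d)))‖ + ‖e x‖))) μ :=
      (hv1.const_mul gbarν).add
        (((hjτe.abs).add ((hv1.add he1).const_mul cτ)).const_mul gbarτ)
    refine Integrable.mono' hbound (hmeas w v) ?_
    filter_upwards [hgood] with x hx
    obtain ⟨hν1, hbν, hbτ, hlν, hlτ, hlj⟩ := hNP x hx
    simp only [jfun, Real.norm_eq_abs]
    have hiv : |(inner ℝ (v x : (EuclideanSpace ℝ (Fin d))) (ν x) : ℝ)| ≤ ‖(v x : (EuclideanSpace ℝ (Fin d)))‖ := by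
      calc |(inner ℝ (v x : (EuclideanSpace ℝ (Fin d))) (ν x) : ℝ)| ≤ ‖(v x : (EuclideanSpace ℝ (Fin d)))‖ * ‖ν x‖ := abs_real_inner_le_norm _ _
        _ = ‖(v x : (EuclideanSpace ℝ (Fin d)))‖ := by rw [hν1, mul_one]
    have hproj : ‖(v x : (EuclideanSpace ℝ (Fin d))) - (inner ℝ (v x : (EuclideanSpace ℝ (Fin d))) (ν x) : ℝ) • ν x‖ ≤ ‖(v x : (EuclideanSpace ℝ (Fin d)))‖ :=
      aux_norm_proj_le (ν x) (v x) hν1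
    have ht1 : |gν x (inner ℝ (w x : (EuclideanSpace ℝ (Fin d))) (ν x)) * (inner ℝ (v x : (EuclideanSpace ℝ (Fin d))) (ν x) : ℝ)|
        ≤ gbarν * ‖(v x : (EuclideanSpace ℝ (Fin d)))‖ := by
      rw [abs_mul]
      refine mul_le_mul ?_ hiv (abs_nonneg _) hgbarν.le
      rw [abs_of_nonneg (hbν _).1]
      exact (hbν _).2
    have ht2 : |gτ x (inner ℝ (w x : (EuclideanSpace ℝ (Fin d))) (ν x)) *
        jτ x ((v x : (EuclideanSpace ℝ (Fin d))) - (inner ℝ (v x : (EuclideanSpace ℝ (Fin d))) (ν x) : ℝ) • ν x)|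
        ≤ gbarτ * (|jτ x (e x)| + cτ * (‖(v x : (EuclideanSpace ℝ (Fin d)))‖ + ‖e x‖)) := by
      rw [abs_mul]
      have hj1 : |jτ x ((v x : (EuclideanSpace ℝ (Fin d))) - (inner ℝ (v x : (EuclideanSpace ℝ (Fin d))) (ν x) : ℝ) • ν x)|
          ≤ |jτ x (e x)| + cτ * (‖(v x : (EuclideanSpace ℝ (Fin d)))‖ + ‖e x‖) := by
        have h1 := hlj ((v x : (EuclideanSpace ℝ (Fin d))) - (inner ℝ (v x : (EuclideanSpace ℝ (Fin d))) (ν x) : ℝ) • ν x) (e x)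
        have h2 : ‖(v x : (EuclideanSpace ℝ (Fin d))) - (inner ℝ (v x : (EuclideanSpace ℝ (Fin d))) (ν x) : ℝ) • ν x - e x‖
            ≤ ‖(v x : (EuclideanSpace ℝ (Fin d)))‖ + ‖e x‖ := by
          calc ‖(v x : (EuclideanSpace ℝ (Fin d))) - (inner ℝ (v x : (EuclideanSpace ℝ (Fin d))) (ν x) : ℝ) • ν x - e x‖
              ≤ ‖(v x : (EuclideanSpace ℝ (Fin d))) - (inner ℝ (v x : (EuclideanSpace ℝ (Fin d))) (ν x) : ℝ) • ν x‖ + ‖e x‖ := norm_sub_le _ _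
            _ ≤ ‖(v x : (EuclideanSpace ℝ (Fin d)))‖ + ‖e x‖ := by linarith
        have h3 := abs_sub_abs_le_abs_sub
          (jτ x ((v x : (EuclideanSpace ℝ (Fin d))) - (inner ℝ (v x : (EuclideanSpace ℝ (Fin d))) (ν x) : ℝ) • ν x)) (jτ x (e x))
        nlinarith [abs_nonneg (jτ x (e x)), hcτ.le]
      refine mul_le_mul ?_ hj1 (abs_nonneg _) hgbarτ.le
      rw [abs_of_nonneg (hbτ _).1]
      exact (hbτ _).2
    calc |gν x (inner ℝ (w x : (EuclideanSpace ℝ (Fin d))) (ν x)) * (inner ℝ (v x : (EuclideanSpace ℝ (Fin d))) (ν x) : ℝ) +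
          gτ x (inner ℝ (w x : (EuclideanSpace ℝ (Fin d))) (ν x)) *
            jτ x ((v x : (EuclideanSpace ℝ (Fin d))) - (inner ℝ (v x : (EuclideanSpace ℝ (Fin d))) (ν x) : ℝ) • ν x)|
        ≤ |gν x (inner ℝ (w x : (EuclideanSpace ℝ (Fin d))) (ν x)) * (inner ℝ (v x : (EuclideanSpace ℝ (Fin d))) (ν x) : ℝ)| +
          |gτ x (inner ℝ (w x : (EuclideanSpace ℝ (Fin d))) (ν x)) *
            jτ x ((v x : (EuclideanSpace ℝ (Fin d))) - (inner ℝ (v x : (EuclideanSpace ℝ (Fin d))) (ν x) : ℝ) • ν x)| := abs_add_le _ _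
      _ ≤ gbarν * ‖(v x : (EuclideanSpace ℝ (Fin d)))‖ + gbarτ * (|jτ x (e x)| + cτ * (‖(v x : (EuclideanSpace ℝ (Fin d)))‖ + ‖e x‖)) := by
          linarith
  -- the global Lipschitz estimate
  set K : ℝ := Real.sqrt (μ Set.univ).toReal * (gbarν + gbarτ * cτ) with hKdef
  have hK0 : 0 ≤ K := by positivity
  have hc0 : 0 ≤ gbarν + gbarτ * cτ := by positivity
  have hlip : ∀ w v₁ v₂ : Lp (EuclideanSpace ℝ (Fin d)) 2 μ,
      |Jfun μ ν gν gτ jτ w v₁ - Jfun μ ν gν gτ jτ w v₂| ≤ K * ‖v₁ - v₂‖ := by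
    intro w v₁ v₂
    have hsub : (⇑(v₁ - v₂) : Ω → (EuclideanSpace ℝ (Fin d))) =ᵐ[μ] fun x => (v₁ x : (EuclideanSpace ℝ (Fin d))) - v₂ x := Lp.coeFn_sub v₁ v₂
    have hnint : Integrable (fun x => ‖(v₁ x : (EuclideanSpace ℝ (Fin d))) - v₂ x‖) μ :=
      (((Lp.memLp (v₁ - v₂)).integrable one_le_two).norm).congr
        (hsub.mono fun x hx => congrArg norm hx)
    have hptwise : ∀ᵐ x ∂μ, |jfun ν gν gτ jτ x (w x) (v₁ x) - jfun ν gν gτ jτ x (w x) (v₂ x)|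
        ≤ (gbarν + gbarτ * cτ) * ‖(v₁ x : (EuclideanSpace ℝ (Fin d))) - v₂ x‖ := by
      filter_upwards [hgood] with x hx
      obtain ⟨hν1, hbν, hbτ, hlν, hlτ, hlj⟩ := hNP x hx
      set a : (EuclideanSpace ℝ (Fin d)) := v₁ x
      set b : (EuclideanSpace ℝ (Fin d)) := v₂ x
      set c : (EuclideanSpace ℝ (Fin d)) := ν x
      set W : ℝ := inner ℝ (w x : (EuclideanSpace ℝ (Fin d))) c
      have hdiff : jfun ν gν gτ jτ x (w x) a - jfun ν gν gτ jτ x (w x) b =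
          gν x W * (inner ℝ (a - b) c : ℝ) +
          gτ x W * (jτ x (a - (inner ℝ a c : ℝ) • c) - jτ x (b - (inner ℝ b c : ℝ) • c)) := by
        simp only [jfun]
        rw [inner_sub_left]
        ring
      have htau : (a - (inner ℝ a c : ℝ) • c) - (b - (inner ℝ b c : ℝ) • c)
          = (a - b) - (inner ℝ (a - b) c : ℝ) • c := by
        rw [inner_sub_left, sub_smul]
        abel
      have hj : |jτ x (a - (inner ℝ a c : ℝ) • c) - jτ x (b - (inner ℝ b c : ℝ) • c)|
          ≤ cτ * ‖a - b‖ := by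
        have h1 := hlj (a - (inner ℝ a c : ℝ) • c) (b - (inner ℝ b c : ℝ) • c)
        rw [htau] at h1
        have h2 : ‖(a - b) - (inner ℝ (a - b) c : ℝ) • c‖ ≤ ‖a - b‖ :=
          aux_norm_proj_le c (a - b) hν1
        nlinarith [hcτ.le]
      have hi : |(inner ℝ (a - b) c : ℝ)| ≤ ‖a - b‖ := by
        calc |(inner ℝ (a - b) c : ℝ)| ≤ ‖a - b‖ * ‖c‖ := abs_real_inner_le_norm _ _
          _ = ‖a - b‖ := by rw [hν1, mul_one]
      rw [hdiff]
      calc |gν x W * (inner ℝ (a - b) c : ℝ) +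
            gτ x W * (jτ x (a - (inner ℝ a c : ℝ) • c) - jτ x (b - (inner ℝ b c : ℝ) • c))|
          ≤ |gν x W * (inner ℝ (a - b) c : ℝ)| +
            |gτ x W * (jτ x (a - (inner ℝ a c : ℝ) • c) - jτ x (b - (inner ℝ b c : ℝ) • c))| :=
            abs_add_le _ _
        _ ≤ gbarν * ‖a - b‖ + gbarτ * (cτ * ‖a - b‖) := by
            rw [abs_mul, abs_mul]
            refine add_le_add (mul_le_mul ?_ hi (abs_nonneg _) hgbarν.le)
              (mul_le_mul ?_ hj (abs_nonneg _) hgbarτ.le)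
            · rw [abs_of_nonneg (hbν _).1]; exact (hbν _).2
            · rw [abs_of_nonneg (hbτ _).1]; exact (hbτ _).2
        _ = (gbarν + gbarτ * cτ) * ‖a - b‖ := by ring
    have h1 : Jfun μ ν gν gτ jτ w v₁ - Jfun μ ν gν gτ jτ w v₂ =
        ∫ x, (jfun ν gν gτ jτ x (w x) (v₁ x) - jfun ν gν gτ jτ x (w x) (v₂ x)) ∂μ := by
      simp only [Jfun]
      rw [integral_sub (hInt w v₁) (hInt w v₂)]
    rw [h1]
    calc |∫ x, (jfun ν gν gτ jτ x (w x) (v₁ x) - jfun ν gν gτ jτ x (w x) (v₂ x)) ∂μ|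
        ≤ ∫ x, |jfun ν gν gτ jτ x (w x) (v₁ x) - jfun ν gν gτ jτ x (w x) (v₂ x)| ∂μ := by
          simpa [Real.norm_eq_abs] using
            norm_integral_le_integral_norm (μ := μ)
              (fun x => jfun ν gν gτ jτ x (w x) (v₁ x) - jfun ν gν gτ jτ x (w x) (v₂ x))
      _ ≤ ∫ x, (gbarν + gbarτ * cτ) * ‖(v₁ x : (EuclideanSpace ℝ (Fin d))) - v₂ x‖ ∂μ := by
          refine integral_mono_ae ((hInt w v₁).sub (hInt w v₂)).abs (hnint.const_mul _) ?_
          exact hptwise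
      _ = (gbarν + gbarτ * cτ) * ∫ x, ‖(v₁ x : (EuclideanSpace ℝ (Fin d))) - v₂ x‖ ∂μ := integral_const_mul _ _
      _ = (gbarν + gbarτ * cτ) * ∫ x, ‖(⇑(v₁ - v₂) : Ω → (EuclideanSpace ℝ (Fin d))) x‖ ∂μ := by
          congr 1
          exact integral_congr_ae (hsub.mono fun x hx => (congrArg norm hx).symm)
      _ ≤ (gbarν + gbarτ * cτ) * (Real.sqrt (μ Set.univ).toReal * ‖v₁ - v₂‖) := by
          exact mul_le_mul_of_nonneg_left (aux_integral_norm_le (v₁ - v₂)) hc0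
      _ = K * ‖v₁ - v₂‖ := by rw [hKdef]; ring
  refine ⟨hInt, ?_, ?_⟩
  · intro w
    refine (LipschitzWith.of_dist_le_mul (K := K.toNNReal) fun v₁ v₂ => ?_).locallyLipschitz
    rw [Real.dist_eq, Real.coe_toNNReal _ hK0, dist_eq_norm]
    exact hlip w v₁ v₂
  · intro w v ζ hζ
    exact aux_clarke_bound hK0 (fun a b => hlip w a b) v hζ
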